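/- Intertwining of backprojection operators: let g : ℝ × ℝ → ℝ be continuous, 2π-periodic in its first argument, and compactly supported in its second argument. For z ∈ ℂ with |z| < 1, define the hyperbolic footprint map π_H(z,θ) := (θ + π + 2·arg(1 − z·e^{−iθ}), 2·Im(z·e^{−iθ})/(1 − |z|²)), and for w ∈ ℂ with |w| < 1 define α(w,φ) := arcsin(Im(w·e^{−iφ})). Then ∫₀^{2π} g(π_H(z,θ)) dθ = √(1 − |Φ(z)|²) · ∫₀^{2π} g( φ − π − α(Φ(z),φ), tan α(Φ(z),φ) ) · (cos α(Φ(z),φ))^{−2} dφ. In operator form, (I₀^H)♯ = Φ* ∘ d^{1/2} (I₀^E)♯ μ^{−2} ∘ Ψ^{−*}, where (I₀^H)♯ and (I₀^E)♯ are the hyperbolic and Euclidean backprojection operators and Ψ(β,a) = (β, arctan a). -/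

import Mathlib

open MeasureTheory

noncomputable section

/-- Hyperbolic footprint map: `π_H(z,θ)` gives the horocyclic coordinates `(β,a)` of the
hyperbolic geodesic through the unit tangent vector `(z,θ)`:
`β = θ + π + 2·arg(1 − z·e^{−iθ})`, `a = 2·Im(z·e^{−iθ})/(1 − |z|²)`. -/
def πH (z : ℂ) (θ : ℝ) : ℝ × ℝ :=
  (θ + Real.pi + 2 * Complex.arg (1 - z * Complex.exp (-Complex.I * (θ : ℂ))),
   2 * (z * Complex.exp (-Complex.I * (θ : ℂ))).im / (1 - ‖z‖ ^ 2))

/-- Fan-beam angle of the Euclidean line through `w` with direction `e^{iφ}`: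
`α(w,φ) = arcsin(Im(w·e^{−iφ}))`. -/
def αE (w : ℂ) (φ : ℝ) : ℝ := Real.arcsin ((w * Complex.exp (-Complex.I * (φ : ℂ))).im)

/-- The projective map `Φ(z) = 2z/(1+|z|²)`. -/
def Φm (z : ℂ) : ℂ := 2 * z / (((1 + ‖z‖ ^ 2 : ℝ)) : ℂ)

private lemma arg_eq_arctan_of_re_pos {v : ℂ} (hv : 0 < v.re) :
    Complex.arg v = Real.arctan (v.im / v.re) := by
  rw [Complex.arg_of_re_nonneg hv.le, Real.arctan_eq_arcsin]
  have h0 : (0:ℝ) < ‖v‖ := by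
    rw [Complex.norm_def]
    exact Real.sqrt_pos.mpr (by rw [Complex.normSq_apply]; nlinarith [sq_nonneg v.im])
  congr 1
  have h1 : Real.sqrt (1 + (v.im / v.re) ^ 2) = ‖v‖ / v.re := by
    rw [show 1 + (v.im / v.re) ^ 2 = (v.re ^ 2 + v.im ^ 2) / v.re ^ 2 by
      field_simp, Real.sqrt_div (by positivity),
      show ‖v‖ = Real.sqrt (v.re ^ 2 + v.im ^ 2) by
        rw [Complex.norm_def, Complex.normSq_apply]; ring_nf,
      Real.sqrt_sq hv.le]
  rw [h1]
  field_simp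

private lemma deriv_identity (X Y R : ℝ) (hR : X ^ 2 + Y ^ 2 = R) (hX : X < 1)
    (h1 : 0 < 1 - R) :
    (1 - R) * (1 + R) / ((1 - R) ^ 2 + 4 * Y ^ 2) =
      1 + 2 * (1 / (1 + (-Y / (1 - X)) ^ 2) * ((- -X * (1 - X) - -Y * (0 - Y)) / (1 - X) ^ 2)) +
        1 / (1 + (2 * Y / (1 - R)) ^ 2) * (2 * -X / (1 - R)) := by
  subst hR
  have hx : (0:ℝ) < 1 - X := by linarith
  have hD : (0:ℝ) < (1 - X) ^ 2 + Y ^ 2 := by positivity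
  have hQ : (0:ℝ) < (1 - (X ^ 2 + Y ^ 2)) ^ 2 + 4 * Y ^ 2 := by positivity
  field_simp
  ring

private lemma prod_one (X Y R : ℝ) (hR : X ^ 2 + Y ^ 2 = R) (h1 : 0 < 1 - R) :
    (1 - R) / (1 + R) * ((1 - R) * (1 + R) / ((1 - R) ^ 2 + 4 * Y ^ 2) *
      (1 + (2 * Y / (1 - R)) ^ 2)) = 1 := by
  subst hR
  have h2 : (0:ℝ) < 1 + (X ^ 2 + Y ^ 2) := by nlinarith [sq_nonneg X, sq_nonneg Y]
  have hQ : (0:ℝ) < (1 - (X ^ 2 + Y ^ 2)) ^ 2 + 4 * Y ^ 2 := by positivity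
  field_simp
  ring

private lemma im_identity (X Y R : ℝ) (hR : X ^ 2 + Y ^ 2 = R) (h1 : 0 < 1 - R) :
    2 / ((1 + R) * ((1 - X) ^ 2 + Y ^ 2)) *
      (1 / Real.sqrt (1 + (2 * Y / (1 - R)) ^ 2) * (Y * (1 - R)) -
       2 * Y / (1 - R) / Real.sqrt (1 + (2 * Y / (1 - R)) ^ 2) * (X * (1 + R) - 2 * R)) =
      2 * Y / (1 - R) / Real.sqrt (1 + (2 * Y / (1 - R)) ^ 2) := by
  have hX : X < 1 := by nlinarith [sq_nonneg Y, sq_nonneg X]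
  subst hR
  have hx : (0:ℝ) < 1 - X := by linarith
  have hD : (0:ℝ) < (1 - X) ^ 2 + Y ^ 2 := by positivity
  have h2 : (0:ℝ) < 1 + (X ^ 2 + Y ^ 2) := by positivity
  have hS : (0:ℝ) < Real.sqrt (1 + (2 * Y / (1 - (X ^ 2 + Y ^ 2))) ^ 2) := by positivity
  field_simp
  ring

private lemma key_sin (z : ℂ) (hz : ‖z‖ < 1) (θ : ℝ) :
    (Φm z * Complex.exp (-Complex.I *
        ((θ + 2 * Real.pi + 2 * Complex.arg (1 - z * Complex.exp (-Complex.I * (θ : ℂ))) +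
          Real.arctan (2 * (z * Complex.exp (-Complex.I * (θ : ℂ))).im /
            (1 - ‖z‖ ^ 2)) : ℝ) : ℂ))).im =
      Real.sin (Real.arctan (2 * (z * Complex.exp (-Complex.I * (θ : ℂ))).im /
        (1 - ‖z‖ ^ 2))) := by
  have h0 : (0:ℝ) ≤ ‖z‖ := norm_nonneg z
  have hR : ‖z‖ ^ 2 < 1 := by nlinarith
  have h1r : (0:ℝ) < 1 - ‖z‖ ^ 2 := by linarith
  have h1r' : (0:ℝ) < 1 + ‖z‖ ^ 2 := by positivity
  set U : ℂ := z * Complex.exp (-Complex.I * (θ : ℂ)) with hU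
  set X : ℝ := U.re
  set Y : ℝ := U.im
  have hXY : X ^ 2 + Y ^ 2 = ‖z‖ ^ 2 := by
    have h1 : ‖U‖ ^ 2 = ‖z‖ ^ 2 := by
      rw [hU, norm_mul, Complex.norm_exp]
      simp
    rw [← h1, Complex.sq_norm, Complex.normSq_apply]; ring
  have hXlt : X < 1 := by nlinarith [sq_nonneg Y]
  have hvre : 0 < (1 - U).re := by
    simp only [Complex.sub_re, Complex.one_re]; linarith
  have hvne : (1 : ℂ) - U ≠ 0 := fun h => by simp [h] at hvre
  have habsvne : (‖1 - U‖ : ℂ) ≠ 0 := by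
    exact_mod_cast (norm_ne_zero_iff.mpr hvne)
  set A : ℝ := Complex.arg (1 - U) with hA
  set a : ℝ := 2 * Y / (1 - ‖z‖ ^ 2) with ha
  set T : ℝ := Real.arctan a with hT
  have h2pi : Complex.exp (-(2 * (Real.pi : ℂ) * Complex.I)) = 1 := by
    rw [Complex.exp_neg, Complex.exp_two_pi_mul_I, inv_one]
  have hsplit : Complex.exp (-Complex.I * ((θ + 2 * Real.pi + 2 * A + T : ℝ) : ℂ)) =
      Complex.exp (-Complex.I * (θ : ℂ)) *
        (Complex.exp (-((A : ℂ) * Complex.I)) * Complex.exp (-((A : ℂ) * Complex.I))) *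
        Complex.exp (-((T : ℂ) * Complex.I)) := by
    rw [show -Complex.I * ((θ + 2 * Real.pi + 2 * A + T : ℝ) : ℂ) =
        (-Complex.I * (θ : ℂ) + -(2 * (Real.pi : ℂ) * Complex.I)) +
          (-((A : ℂ) * Complex.I) + -((A : ℂ) * Complex.I)) + -((T : ℂ) * Complex.I) by
      push_cast; ring]
    rw [Complex.exp_add, Complex.exp_add, Complex.exp_add, Complex.exp_add, h2pi, mul_one]
  have hexpA : Complex.exp ((A : ℂ) * Complex.I) = (1 - U) / (‖1 - U‖ : ℂ) := by
    rw [eq_div_iff habsvne, mul_comm]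
    exact Complex.norm_mul_exp_arg_mul_I (1 - U)
  have hexpAneg : Complex.exp (-((A : ℂ) * Complex.I)) =
      (starRingEnd ℂ) (1 - U) / (‖1 - U‖ : ℂ) := by
    rw [Complex.exp_neg, hexpA, inv_div, div_eq_div_iff hvne habsvne,
      mul_comm ((starRingEnd ℂ) (1 - U)) (1 - U), Complex.mul_conj, Complex.normSq_eq_norm_sq]
    push_cast; ring
  have hexpT : Complex.exp (-((T : ℂ) * Complex.I)) =
      (Real.cos T : ℂ) - (Real.sin T : ℂ) * Complex.I := by
    rw [show -((T : ℂ) * Complex.I) = ((-T : ℝ) : ℂ) * Complex.I by push_cast; ring,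
      Complex.exp_mul_I, ← Complex.ofReal_cos, ← Complex.ofReal_sin, Real.cos_neg,
      Real.sin_neg]
    push_cast; ring
  have hDv : (‖1 - U‖) ^ 2 = (1 - X) ^ 2 + Y ^ 2 := by
    rw [Complex.sq_norm, Complex.normSq_apply]
    simp only [Complex.sub_re, Complex.sub_im, Complex.one_re, Complex.one_im]
    ring
  have hDvpos : (0:ℝ) < (1 - X) ^ 2 + Y ^ 2 := by positivity
  have hmain : Φm z * Complex.exp (-Complex.I * ((θ + 2 * Real.pi + 2 * A + T : ℝ) : ℂ)) =
      ((2 / ((1 + ‖z‖ ^ 2) * ((1 - X) ^ 2 + Y ^ 2)) : ℝ) : ℂ) *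
        ((U * ((starRingEnd ℂ) (1 - U)) ^ 2) *
          ((Real.cos T : ℂ) - (Real.sin T : ℂ) * Complex.I)) := by
    rw [hsplit, hexpAneg, hexpT, Φm]
    rw [show ((2 / ((1 + ‖z‖ ^ 2) * ((1 - X) ^ 2 + Y ^ 2)) : ℝ) : ℂ) =
        2 / (((1 + ‖z‖ ^ 2 : ℝ) : ℂ) * (((1 - X) ^ 2 + Y ^ 2 : ℝ) : ℂ)) by
      push_cast; ring]
    have hcast : (((1 - X) ^ 2 + Y ^ 2 : ℝ) : ℂ) = ((‖1 - U‖ : ℂ)) ^ 2 := by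
      rw [← hDv]; push_cast; ring
    rw [hcast]
    have hc1 : ((1 + ‖z‖ ^ 2 : ℝ) : ℂ) ≠ 0 := by
      exact_mod_cast h1r'.ne'
    field_simp
    rw [hU]; ring_nf
  have him1 : (U * ((starRingEnd ℂ) (1 - U)) ^ 2).im = Y * (1 - ‖z‖ ^ 2) := by
    rw [← hXY, pow_two]
    simp only [Complex.mul_im, Complex.mul_re, Complex.sub_re, Complex.sub_im,
      Complex.one_re, Complex.one_im, Complex.conj_re, Complex.conj_im]
    ring
  have hre1 : (U * ((starRingEnd ℂ) (1 - U)) ^ 2).re =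
      X * (1 + ‖z‖ ^ 2) - 2 * ‖z‖ ^ 2 := by
    rw [← hXY, pow_two]
    simp only [Complex.mul_im, Complex.mul_re, Complex.sub_re, Complex.sub_im,
      Complex.one_re, Complex.one_im, Complex.conj_re, Complex.conj_im]
    ring
  have himgen : ∀ (k c s : ℝ) (P : ℂ),
      ((k : ℂ) * (P * ((c : ℂ) - (s : ℂ) * Complex.I))).im =
        k * (c * P.im - s * P.re) := by
    intro k c s P
    simp only [Complex.mul_im, Complex.mul_re, Complex.sub_re, Complex.sub_im,
      Complex.ofReal_re, Complex.ofReal_im, Complex.I_re, Complex.I_im]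
    ring
  rw [hmain, himgen, him1, hre1, hT, Real.sin_arctan, Real.cos_arctan, ha]
  exact im_identity X Y (‖z‖ ^ 2) hXY h1r

private lemma hasDerivAt_F (z : ℂ) (hz : ‖z‖ < 1) (θ : ℝ) :
    HasDerivAt (fun t : ℝ =>
        t + 2 * Real.pi + 2 * Complex.arg (1 - z * Complex.exp (-Complex.I * (t : ℂ))) +
          Real.arctan (2 * (z * Complex.exp (-Complex.I * (t : ℂ))).im /
            (1 - ‖z‖ ^ 2)))
      ((1 - ‖z‖ ^ 2) * (1 + ‖z‖ ^ 2) /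
        ((1 - ‖z‖ ^ 2) ^ 2 +
          4 * (z * Complex.exp (-Complex.I * (θ : ℂ))).im ^ 2)) θ := by
  have h0 : (0:ℝ) ≤ ‖z‖ := norm_nonneg z
  have hR : ‖z‖ ^ 2 < 1 := by nlinarith
  have h1r : (0:ℝ) < 1 - ‖z‖ ^ 2 := by linarith
  have hre : ∀ t : ℝ, (z * Complex.exp (-Complex.I * (t : ℂ))).re =
      z.re * Real.cos t + z.im * Real.sin t := by
    intro t
    rw [show -Complex.I * (t : ℂ) = ((-t : ℝ) : ℂ) * Complex.I by push_cast; ring,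
      Complex.exp_mul_I]
    simp [Complex.mul_re, Complex.mul_im, Complex.cos_ofReal_re, Complex.sin_ofReal_re,
      Real.cos_neg, Real.sin_neg]
  have him : ∀ t : ℝ, (z * Complex.exp (-Complex.I * (t : ℂ))).im =
      z.im * Real.cos t - z.re * Real.sin t := by
    intro t
    rw [show -Complex.I * (t : ℂ) = ((-t : ℝ) : ℂ) * Complex.I by push_cast; ring,
      Complex.exp_mul_I]
    simp [Complex.mul_re, Complex.mul_im, Complex.cos_ofReal_re, Complex.sin_ofReal_re,
      Real.cos_neg, Real.sin_neg]
    ring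
  set X : ℝ := (z * Complex.exp (-Complex.I * (θ : ℂ))).re with hXdef
  set Y : ℝ := (z * Complex.exp (-Complex.I * (θ : ℂ))).im with hYdef
  have hXY : X ^ 2 + Y ^ 2 = ‖z‖ ^ 2 := by
    have h1 : ‖z * Complex.exp (-Complex.I * (θ : ℂ))‖ ^ 2 =
        ‖z‖ ^ 2 := by
      rw [norm_mul, Complex.norm_exp]; simp
    rw [← h1, Complex.sq_norm, Complex.normSq_apply]; ring
  have hXlt : X < 1 := by nlinarith [sq_nonneg Y]
  have hXd : HasDerivAt (fun t : ℝ => (z * Complex.exp (-Complex.I * (t : ℂ))).re) Y θ := by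
    have key := ((Real.hasDerivAt_cos θ).const_mul z.re).add
      ((Real.hasDerivAt_sin θ).const_mul z.im)
    have hfun : (fun t : ℝ => (z * Complex.exp (-Complex.I * (t : ℂ))).re) =
        fun t => z.re * Real.cos t + z.im * Real.sin t := funext hre
    rw [hfun]
    refine key.congr_deriv ?_
    rw [hYdef, him]; ring
  have hYd : HasDerivAt (fun t : ℝ => (z * Complex.exp (-Complex.I * (t : ℂ))).im) (-X) θ := by
    have key := ((Real.hasDerivAt_cos θ).const_mul z.im).sub
      ((Real.hasDerivAt_sin θ).const_mul z.re)
    have hfun : (fun t : ℝ => (z * Complex.exp (-Complex.I * (t : ℂ))).im) =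
        fun t => z.im * Real.cos t - z.re * Real.sin t := funext him
    rw [hfun]
    refine key.congr_deriv ?_
    rw [hXdef, hre]; ring
  have hvre : ∀ t : ℝ, 0 < (1 - z * Complex.exp (-Complex.I * (t : ℂ))).re := by
    intro t
    have h1 : (z * Complex.exp (-Complex.I * (t : ℂ))).re ^ 2 +
        (z * Complex.exp (-Complex.I * (t : ℂ))).im ^ 2 = ‖z‖ ^ 2 := by
      have h2 : ‖z * Complex.exp (-Complex.I * (t : ℂ))‖ ^ 2 =
          ‖z‖ ^ 2 := by rw [norm_mul, Complex.norm_exp]; simp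
      rw [← h2, Complex.sq_norm, Complex.normSq_apply]; ring
    simp only [Complex.sub_re, Complex.one_re]
    nlinarith [sq_nonneg ((z * Complex.exp (-Complex.I * (t : ℂ))).im)]
  have hargfun : (fun t : ℝ =>
      t + 2 * Real.pi + 2 * Complex.arg (1 - z * Complex.exp (-Complex.I * (t : ℂ))) +
        Real.arctan (2 * (z * Complex.exp (-Complex.I * (t : ℂ))).im /
          (1 - ‖z‖ ^ 2))) =
      fun t : ℝ =>
        t + 2 * Real.pi +
          2 * Real.arctan (-(z * Complex.exp (-Complex.I * (t : ℂ))).im /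
            (1 - (z * Complex.exp (-Complex.I * (t : ℂ))).re)) +
          Real.arctan (2 * (z * Complex.exp (-Complex.I * (t : ℂ))).im /
            (1 - ‖z‖ ^ 2)) := by
    funext t
    rw [arg_eq_arctan_of_re_pos (hvre t)]
    simp [Complex.sub_re, Complex.sub_im]
  rw [hargfun]
  have hden : (1 : ℝ) - X ≠ 0 := by linarith
  have h1ne : 1 - (z * Complex.exp (-Complex.I * (θ : ℂ))).re ≠ 0 := hden
  have hd1 := ((hYd.neg).div ((hasDerivAt_const θ (1:ℝ)).sub hXd) h1ne).arctan
  have hd2 := (((hYd.const_mul 2).div_const (1 - ‖z‖ ^ 2))).arctan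
  have hfull := (((hasDerivAt_id θ).add_const (2 * Real.pi)).add (hd1.const_mul 2)).add hd2
  refine hfull.congr_deriv ?_
  rw [← hYdef]
  exact (deriv_identity X Y (‖z‖ ^ 2) hXY hXlt h1r).symm

/-- Intertwining of backprojection operators
(`(I₀^H)♯ = Φ* ∘ d^{1/2} (I₀^E)♯ μ^{−2} ∘ Ψ^{−*}`): for `g : ℝ × ℝ → ℝ` continuous,
`2π`-periodic in its first argument and compactly supported in its second argument,
and `|z| < 1`,
`∫₀^{2π} g(π_H(z,θ)) dθ = √(1 − |Φ(z)|²) ·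
  ∫₀^{2π} g(φ − π − α(Φ(z),φ), tan α(Φ(z),φ)) · (cos α(Φ(z),φ))^{−2} dφ`. -/
theorem backprojection_intertwining (g : ℝ × ℝ → ℝ) (hg : Continuous g)
    (hper : ∀ β a : ℝ, g (β + 2 * Real.pi, a) = g (β, a))
    (hsupp : ∃ M : ℝ, ∀ β a : ℝ, M ≤ |a| → g (β, a) = 0)
    (z : ℂ) (hz : ‖z‖ < 1) :
    (∫ θ in (0 : ℝ)..(2 * Real.pi), g (πH z θ)) =
      Real.sqrt (1 - ‖Φm z‖ ^ 2) *
        ∫ φ in (0 : ℝ)..(2 * Real.pi),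
          g (φ - Real.pi - αE (Φm z) φ, Real.tan (αE (Φm z) φ)) /
            Real.cos (αE (Φm z) φ) ^ 2 := by
  have h0 : (0:ℝ) ≤ ‖z‖ := norm_nonneg z
  have hR : ‖z‖ ^ 2 < 1 := by nlinarith
  have h1r : (0:ℝ) < 1 - ‖z‖ ^ 2 := by linarith
  have h1r' : (0:ℝ) < 1 + ‖z‖ ^ 2 := by positivity
  set w : ℂ := Φm z with hwdef
  -- |w| and the square root factor
  have habsw : ‖w‖ = 2 * ‖z‖ / (1 + ‖z‖ ^ 2) := by
    rw [hwdef, Φm, norm_div, norm_mul, Complex.norm_two, Complex.norm_real, Real.norm_eq_abs,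
      abs_of_pos h1r']
  have hwlt : ‖w‖ < 1 := by
    rw [habsw, div_lt_one h1r']
    nlinarith [sq_nonneg (1 - ‖z‖)]
  have hsqrt : Real.sqrt (1 - ‖w‖ ^ 2) =
      (1 - ‖z‖ ^ 2) / (1 + ‖z‖ ^ 2) := by
    rw [show 1 - ‖w‖ ^ 2 =
        ((1 - ‖z‖ ^ 2) / (1 + ‖z‖ ^ 2)) ^ 2 by
      rw [habsw]; field_simp; ring]
    exact Real.sqrt_sq (by positivity)
  -- cos (αE w φ) is positive
  have habsWφ : ∀ φ : ℝ, ‖w * Complex.exp (-Complex.I * (φ : ℂ))‖ =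
      ‖w‖ := by
    intro φ
    rw [norm_mul, Complex.norm_exp]
    simp
  have hWim : ∀ φ : ℝ, |(w * Complex.exp (-Complex.I * (φ : ℂ))).im| ≤ ‖w‖ :=
    fun φ => (habsWφ φ) ▸ Complex.abs_im_le_norm _
  have hcosα : ∀ φ : ℝ, 0 < Real.cos (αE w φ) := by
    intro φ
    rw [αE, Real.cos_arcsin]
    have h1 := hWim φ
    have h2 : (w * Complex.exp (-Complex.I * (φ : ℂ))).im ^ 2 < 1 := by
      nlinarith [abs_nonneg ((w * Complex.exp (-Complex.I * (φ : ℂ))).im),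
        sq_abs ((w * Complex.exp (-Complex.I * (φ : ℂ))).im)]
    exact Real.sqrt_pos.mpr (by linarith)
  -- continuity of the Euclidean integrand
  have hαE_cont : Continuous (αE w) := by
    have h1 : Continuous fun φ : ℝ => (w * Complex.exp (-Complex.I * (φ : ℂ))).im :=
      Complex.continuous_im.comp
        (continuous_const.mul (Complex.continuous_exp.comp
          (continuous_const.mul Complex.continuous_ofReal)))
    exact Real.continuous_arcsin.comp h1
  have htan_cont : Continuous fun φ : ℝ => Real.tan (αE w φ) := by
    rw [continuous_iff_continuousAt]
    intro φ
    exact (Real.continuousAt_tan.mpr (hcosα φ).ne').comp hαE_cont.continuousAt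
  set f : ℝ → ℝ := fun φ =>
    g (φ - Real.pi - αE w φ, Real.tan (αE w φ)) / Real.cos (αE w φ) ^ 2 with hfdef
  have hf_cont : Continuous f := by
    apply Continuous.div
    · exact hg.comp (((continuous_id.sub continuous_const).sub hαE_cont).prodMk htan_cont)
    · exact (Real.continuous_cos.comp hαE_cont).pow 2
    · exact fun φ => pow_ne_zero 2 (hcosα φ).ne'
  -- periodicity of f
  have hexpper : ∀ φ : ℝ, Complex.exp (-Complex.I * ((φ + 2 * Real.pi : ℝ) : ℂ)) =
      Complex.exp (-Complex.I * (φ : ℂ)) := by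
    intro φ
    rw [show -Complex.I * ((φ + 2 * Real.pi : ℝ) : ℂ) =
        -Complex.I * (φ : ℂ) + -(2 * (Real.pi : ℂ) * Complex.I) by push_cast; ring,
      Complex.exp_add, Complex.exp_neg, Complex.exp_two_pi_mul_I, inv_one, mul_one]
  have hαper : ∀ φ : ℝ, αE w (φ + 2 * Real.pi) = αE w φ := by
    intro φ
    rw [αE, αE, hexpper]
  have hfper : Function.Periodic f (2 * Real.pi) := by
    intro φ
    rw [hfdef]
    simp only
    rw [hαper φ, show φ + 2 * Real.pi - Real.pi - αE w φ =
      (φ - Real.pi - αE w φ) + 2 * Real.pi by ring, hper]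
  -- the substitution map F and its derivative
  set F : ℝ → ℝ := fun t =>
      t + 2 * Real.pi + 2 * Complex.arg (1 - z * Complex.exp (-Complex.I * (t : ℂ))) +
        Real.arctan (2 * (z * Complex.exp (-Complex.I * (t : ℂ))).im /
          (1 - ‖z‖ ^ 2)) with hFdef
  set F' : ℝ → ℝ := fun t =>
      (1 - ‖z‖ ^ 2) * (1 + ‖z‖ ^ 2) /
        ((1 - ‖z‖ ^ 2) ^ 2 +
          4 * (z * Complex.exp (-Complex.I * (t : ℂ))).im ^ 2) with hF'def
  have hFd : ∀ t : ℝ, HasDerivAt F (F' t) t := fun t => hasDerivAt_F z hz t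
  have hF'cont : Continuous F' := by
    have himc : Continuous fun t : ℝ => (z * Complex.exp (-Complex.I * (t : ℂ))).im :=
      Complex.continuous_im.comp
        (continuous_const.mul (Complex.continuous_exp.comp
          (continuous_const.mul Complex.continuous_ofReal)))
    apply Continuous.div continuous_const
      (continuous_const.add (continuous_const.mul (himc.pow 2)))
    intro t
    have : (0:ℝ) < (1 - ‖z‖ ^ 2) ^ 2 +
        4 * (z * Complex.exp (-Complex.I * (t : ℂ))).im ^ 2 := by positivity
    exact this.ne'
  -- the key pointwise facts
  have hXY : ∀ t : ℝ, (z * Complex.exp (-Complex.I * (t : ℂ))).re ^ 2 +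
      (z * Complex.exp (-Complex.I * (t : ℂ))).im ^ 2 = ‖z‖ ^ 2 := by
    intro t
    have h2 : ‖z * Complex.exp (-Complex.I * (t : ℂ))‖ ^ 2 =
        ‖z‖ ^ 2 := by rw [norm_mul, Complex.norm_exp]; simp
    rw [← h2, Complex.sq_norm, Complex.normSq_apply]; ring
  have hαF : ∀ t : ℝ, αE w (F t) =
      Real.arctan (2 * (z * Complex.exp (-Complex.I * (t : ℂ))).im /
        (1 - ‖z‖ ^ 2)) := by
    intro t
    rw [αE, hFdef]
    simp only
    rw [key_sin z hz t, Real.sin_arctan, ← Real.arctan_eq_arcsin]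
  have hpoint : ∀ t : ℝ, g (πH z t) =
      Real.sqrt (1 - ‖w‖ ^ 2) * (F' t * f (F t)) := by
    intro t
    set a : ℝ := 2 * (z * Complex.exp (-Complex.I * (t : ℂ))).im /
      (1 - ‖z‖ ^ 2) with ha
    have hcos2 : Real.cos (Real.arctan a) ^ 2 = 1 / (1 + a ^ 2) := by
      rw [Real.cos_arctan, div_pow, one_pow, Real.sq_sqrt (by positivity)]
    have hf1 : f (F t) = g (t + Real.pi +
        2 * Complex.arg (1 - z * Complex.exp (-Complex.I * (t : ℂ))), a) * (1 + a ^ 2) := by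
      rw [hfdef]
      simp only
      rw [hαF t, ← ha, Real.tan_arctan, hcos2,
        show F t - Real.pi - Real.arctan a = t + Real.pi +
          2 * Complex.arg (1 - z * Complex.exp (-Complex.I * (t : ℂ))) by
          rw [hFdef]; simp only [← ha]; ring]
      field_simp
    rw [hf1, hsqrt, πH]
    rw [show (1 - ‖z‖ ^ 2) / (1 + ‖z‖ ^ 2) *
        (F' t * (g (t + Real.pi +
          2 * Complex.arg (1 - z * Complex.exp (-Complex.I * (t : ℂ))), a) * (1 + a ^ 2))) =
        g (t + Real.pi +
          2 * Complex.arg (1 - z * Complex.exp (-Complex.I * (t : ℂ))), a) *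
          ((1 - ‖z‖ ^ 2) / (1 + ‖z‖ ^ 2) *
            (F' t * (1 + a ^ 2))) by ring]
    rw [hF'def]
    simp only
    rw [ha]
    rw [prod_one ((z * Complex.exp (-Complex.I * (t : ℂ))).re)
      ((z * Complex.exp (-Complex.I * (t : ℂ))).im) (‖z‖ ^ 2) (hXY t) h1r,
      mul_one]
  -- F (2π) = F 0 + 2π
  have hu2π : (z * Complex.exp (-Complex.I * ((2 * Real.pi : ℝ) : ℂ))) =
      z * Complex.exp (-Complex.I * ((0 : ℝ) : ℂ)) := by
    rw [show -Complex.I * ((2 * Real.pi : ℝ) : ℂ) = -(2 * (Real.pi : ℂ) * Complex.I) by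
        push_cast; ring,
      Complex.exp_neg, Complex.exp_two_pi_mul_I, inv_one]
    norm_num
  have hF2π : F (2 * Real.pi) = F 0 + 2 * Real.pi := by
    rw [hFdef]
    simp only
    rw [hu2π]
    ring
  -- putting everything together
  calc (∫ θ in (0:ℝ)..(2 * Real.pi), g (πH z θ))
      = ∫ θ in (0:ℝ)..(2 * Real.pi),
          Real.sqrt (1 - ‖w‖ ^ 2) * (F' θ * f (F θ)) :=
        intervalIntegral.integral_congr (fun θ _ => hpoint θ)
    _ = Real.sqrt (1 - ‖w‖ ^ 2) *
          ∫ θ in (0:ℝ)..(2 * Real.pi), F' θ * f (F θ) :=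
        intervalIntegral.integral_const_mul _ _
    _ = Real.sqrt (1 - ‖w‖ ^ 2) *
          ∫ x in (F 0)..(F (2 * Real.pi)), f x := by
        rw [show (∫ θ in (0:ℝ)..(2 * Real.pi), F' θ * f (F θ)) =
            ∫ θ in (0:ℝ)..(2 * Real.pi), F' θ • (f ∘ F) θ by
          simp only [smul_eq_mul, Function.comp]]
        rw [intervalIntegral.integral_comp_smul_deriv (fun x _ => hFd x)
          hF'cont.continuousOn hf_cont]
    _ = Real.sqrt (1 - ‖w‖ ^ 2) *
          ∫ x in (0:ℝ)..(2 * Real.pi), f x := by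
        rw [hF2π]
        rw [hfper.intervalIntegral_add_eq (F 0) 0, zero_add]
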